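/- Let b ∈ ℝ with 0 < |b| < 1. Define τ : ℝ² → ℝ by τ(0,0) = 0 and, for (x, ξ) ≠ (0,0), τ(x, ξ) = −2√(x² + ξ²) · sin( (1/3) · arcsin( b x³ / (x² + ξ²)^{3/2} ) ). Then τ(0, ξ) = 0 for all ξ ∈ ℝ, and for every (x, ξ) ≠ (0,0) one has τ(x,ξ)³ − 3(x² + ξ²)·τ(x,ξ) − 2bx³ = 0; i.e., τ is the root of the cubic p(·, x, ξ) = τ³ − 3(x²+ξ²)τ − 2bx³ that vanishes identically on the line x = 0. -/
import Mathlib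


/-- The root of the cubic `τ³ − 3(x²+ξ²)τ − 2bx³` that vanishes identically on the line
`x = 0`, given by the explicit trigonometric formula of Section 4. -/
noncomputable def tauRoot (b : ℝ) (p : ℝ × ℝ) : ℝ :=
  if p = (0, 0) then 0
  else
    -2 * Real.sqrt (p.1 ^ 2 + p.2 ^ 2) *
      Real.sin ((1 / 3) * Real.arcsin (b * p.1 ^ 3 / (p.1 ^ 2 + p.2 ^ 2) ^ ((3:ℝ) / 2)))

/-- `tauRoot` vanishes on the line `x = 0` and is a root of the cubic
`τ³ − 3(x²+ξ²)τ − 2bx³` at every `(x, ξ) ≠ (0,0)`. -/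
theorem tauRoot_is_root (b : ℝ) (hb₀ : 0 < |b|) (hb₁ : |b| < 1) :
    (∀ ξ : ℝ, tauRoot b (0, ξ) = 0) ∧
    ∀ p : ℝ × ℝ, p ≠ (0, 0) →
      (tauRoot b p) ^ 3 - 3 * (p.1 ^ 2 + p.2 ^ 2) * tauRoot b p - 2 * b * p.1 ^ 3 = 0 := by
  constructor
  · intro ξ
    rw [tauRoot]
    split_ifs with h
    · rfl
    · norm_num
  · intro p hp
    obtain ⟨x, ξ⟩ := p
    simp only [ne_eq, Prod.mk.injEq, not_and_or] at hp
    have hA : (0 : ℝ) < x ^ 2 + ξ ^ 2 := by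
      rcases hp with h | h <;> positivity
    set A : ℝ := x ^ 2 + ξ ^ 2 with hAdef
    set r : ℝ := Real.sqrt A with hrdef
    have hr : 0 < r := Real.sqrt_pos.mpr hA
    have hr2 : r ^ 2 = A := Real.sq_sqrt hA.le
    have hpow : A ^ ((3:ℝ)/2) = r ^ 3 := by
      rw [hrdef, show (3:ℝ)/2 = (1/2) * (3:ℕ) by norm_num, Real.rpow_mul hA.le,
        Real.rpow_natCast, ← Real.sqrt_eq_rpow]
    set s : ℝ := b * x ^ 3 / A ^ ((3:ℝ)/2) with hsdef
    have hx3 : |x| ^ 3 ≤ r ^ 3 := by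
      have hx : |x| ≤ r := by
        rw [hrdef]
        have : |x| = Real.sqrt (x ^ 2) := (Real.sqrt_sq_eq_abs x).symm
        rw [this]
        exact Real.sqrt_le_sqrt (by nlinarith)
      exact pow_le_pow_left₀ (abs_nonneg x) hx 3
    have hs : |s| ≤ 1 := by
      rw [hsdef, hpow, abs_div, abs_mul, abs_pow, abs_pow]
      rw [abs_of_pos hr]
      rw [div_le_one (pow_pos hr 3)]
      calc |b| * |x| ^ 3 ≤ 1 * |x| ^ 3 := by
            apply mul_le_mul_of_nonneg_right hb₁.le (by positivity)
        _ = |x| ^ 3 := by ring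
        _ ≤ r ^ 3 := hx3
    have hs1 : -1 ≤ s := (abs_le.mp hs).1
    have hs2 : s ≤ 1 := (abs_le.mp hs).2
    have hne : ((x : ℝ), ξ) ≠ ((0 : ℝ), (0 : ℝ)) := by
      simp only [ne_eq, Prod.mk.injEq, not_and_or]; exact hp
    have hτ : tauRoot b (x, ξ) = -2 * r * Real.sin ((1/3) * Real.arcsin s) := by
      rw [tauRoot, if_neg hne]
    set θ : ℝ := (1/3) * Real.arcsin s with hθ
    have h3θ : Real.sin (3 * θ) = s := by
      rw [hθ, show (3 : ℝ) * ((1/3) * Real.arcsin s) = Real.arcsin s by ring,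
        Real.sin_arcsin hs1 hs2]
    have hsin3 : Real.sin (3 * θ) = 3 * Real.sin θ - 4 * Real.sin θ ^ 3 :=
      Real.sin_three_mul θ
    have hkey : 3 * Real.sin θ - 4 * Real.sin θ ^ 3 = s := by rw [← hsin3, h3θ]
    show tauRoot b (x, ξ) ^ 3 - 3 * A * tauRoot b (x, ξ) - 2 * b * x ^ 3 = 0
    rw [hτ]
    have hseq : s * r ^ 3 = b * x ^ 3 := by
      rw [hsdef, hpow]
      field_simp
    rw [← hr2]
    linear_combination 2 * r ^ 3 * hkey + 2 * hseq
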